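/- In a unital associative algebra with the Jordan product, for every x one has e^{2 L_x} = U_{e^x}, i.e. the exponential of twice the multiplication operator equals the quadratic representation of the exponential of x. -/

import Mathlib

open NormedSpace

/-- Left multiplication as a ring hom into continuous linear maps. -/
noncomputable def mulLeftRingHom' (A : Type*) [NormedRing A] [NormedAlgebra ℝ A] :
    A →+* (A →L[ℝ] A) where
  toFun a := ContinuousLinearMap.mul ℝ A a
  map_one' := by ext y; simp
  map_mul' a b := by ext y; simp [mul_assoc]
  map_zero' := by ext y; simp
  map_add' a b := by ext y; simp [add_mul]

/-- Right multiplication, as a ring hom from the opposite algebra. -/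
noncomputable def mulRightRingHom' (A : Type*) [NormedRing A] [NormedAlgebra ℝ A] :
    Aᵐᵒᵖ →+* (A →L[ℝ] A) where
  toFun a := (ContinuousLinearMap.mul ℝ A).flip a.unop
  map_one' := by ext y; simp
  map_mul' a b := by ext y; simp [mul_assoc]
  map_zero' := by ext y; simp
  map_add' a b := by ext y; simp [mul_add]

/-- In a unital associative Banach algebra with Jordan product
`x∘y = ½(xy+yx)` and `L_x y = x∘y`, one has `e^{2 L_x} = U_{e^x}`,
i.e. `exp (2 L_x) y = e^x y e^x` for all `y`. -/
theorem stmt8 (A : Type*) [NormedRing A] [NormedAlgebra ℝ A] [CompleteSpace A]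
    (L : A → A →L[ℝ] A)
    (hL : ∀ x y : A, L x y = (1 / 2 : ℝ) • (x * y + y * x)) (x : A) :
    ∀ y : A, exp ((2 : ℝ) • L x) y = exp x * y * exp x := by
  intro y
  letI : NormedAlgebra ℚ A := NormedAlgebra.restrictScalars ℚ ℝ A
  letI : NormedAlgebra ℚ Aᵐᵒᵖ := NormedAlgebra.restrictScalars ℚ ℝ Aᵐᵒᵖ
  letI : NormedAlgebra ℚ (A →L[ℝ] A) := NormedAlgebra.restrictScalars ℚ ℝ (A →L[ℝ] A)
  set l : A →L[ℝ] A := ContinuousLinearMap.mul ℝ A x with hl_def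
  set r : A →L[ℝ] A := (ContinuousLinearMap.mul ℝ A).flip x with hr_def
  have hsum : (2 : ℝ) • L x = l + r := by
    ext z
    simp only [ContinuousLinearMap.smul_apply, ContinuousLinearMap.add_apply, hL,
      hl_def, hr_def, ContinuousLinearMap.mul_apply', ContinuousLinearMap.flip_apply]
    rw [smul_smul]
    norm_num
  have hcomm : Commute l r := by
    ext z
    simp [hl_def, hr_def, mul_assoc]
  have hl : exp l = ContinuousLinearMap.mul ℝ A (exp x) := by
    have := map_exp (mulLeftRingHom' A) (ContinuousLinearMap.mul ℝ A).continuous x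
    simpa [mulLeftRingHom', hl_def] using this.symm
  have hr : exp r = (ContinuousLinearMap.mul ℝ A).flip (exp x) := by
    have hc : Continuous (mulRightRingHom' A) :=
      (ContinuousLinearMap.mul ℝ A).flip.continuous.comp MulOpposite.continuous_unop
    have := map_exp (mulRightRingHom' A) hc (MulOpposite.op x)
    rw [exp_op] at this
    simpa [mulRightRingHom', hr_def] using this.symm
  rw [hsum, exp_add_of_commute hcomm, hl, hr]
  simp [mul_assoc]
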